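/- Let B be a unital complex star algebra, let q > 0 be a real number, and let a, b ∈ ℂ with |a·b| = 1. Suppose z ∈ B satisfies z·z* = z*·z = 1, and y, w ∈ B satisfy y* = −q^{−1/2}·a·w·z* and w* = q^{1/2}·b·y·z*. Then z·y·z* = −a·b̄·y, where b̄ is the complex conjugate of b. -/

import Mathlib

/-- In a unital complex star algebra `B`, if `z` is unitary, `q > 0`,
`|a·b| = 1`, and `y* = −q^{−1/2}·a·w·z*`, `w* = q^{1/2}·b·y·z*`, then
`z·y·z* = −a·conj(b)·y`. -/
theorem stmt13 {B : Type*} [Ring B] [Algebra ℂ B] [StarRing B] [StarModule ℂ B]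
    (q : ℝ) (hq : 0 < q) (a b : ℂ) (hab : ‖a * b‖ = 1)
    (z y w : B) (hz₁ : z * star z = 1) (hz₂ : star z * z = 1)
    (hy : star y = -(algebraMap ℂ B (((Real.sqrt q)⁻¹ : ℝ) * a)) * w * star z)
    (hw : star w = algebraMap ℂ B ((Real.sqrt q : ℝ) * b) * y * star z) :
    z * y * star z = -(algebraMap ℂ B (a * (starRingEnd ℂ) b)) * y := by
  have hs : (Real.sqrt q : ℂ) ≠ 0 := by
    simp [Complex.ofReal_ne_zero, Real.sqrt_ne_zero', hq]
  set c₁ : ℂ := ((Real.sqrt q)⁻¹ : ℝ) * a with hc₁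
  set c₂ : ℂ := (Real.sqrt q : ℝ) * b with hc₂
  have hy' : star y = -(c₁ • (w * star z)) := by
    rw [hy, Algebra.smul_def, neg_mul, neg_mul, mul_assoc]
  have hw' : star w = c₂ • (y * star z) := by
    rw [hw, Algebra.smul_def, mul_assoc]
  have h1 : y = -((starRingEnd ℂ) c₁ • (z * star w)) := by
    conv_lhs => rw [← star_star y, hy']
    rw [star_neg, star_smul, star_mul w (star z), star_star, starRingEnd_apply]
  have h2 : y = -(((starRingEnd ℂ) c₁ * c₂) • (z * y * star z)) := by
    conv_lhs => rw [h1, hw']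
    rw [mul_smul_comm, ← mul_assoc, smul_smul]
  have hcc : (starRingEnd ℂ) c₁ * c₂ = (starRingEnd ℂ) a * b := by
    rw [hc₁, hc₂, map_mul]
    have h0 : (starRingEnd ℂ) (((Real.sqrt q)⁻¹ : ℝ) : ℂ) = ((Real.sqrt q)⁻¹ : ℝ) := by
      simp [Complex.conj_ofReal]
    rw [h0]
    push_cast
    field_simp
  rw [hcc] at h2
  have hinv : (a * (starRingEnd ℂ) b) * ((starRingEnd ℂ) a * b) = 1 := by
    have habs : Complex.normSq a * Complex.normSq b = 1 := by
      have h := congrArg (· ^ 2) hab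
      simpa [mul_pow, Complex.sq_norm] using h
    calc (a * (starRingEnd ℂ) b) * ((starRingEnd ℂ) a * b)
        = (a * (starRingEnd ℂ) a) * (b * (starRingEnd ℂ) b) := by ring
      _ = (Complex.normSq a : ℂ) * (Complex.normSq b : ℂ) := by
          rw [Complex.mul_conj, Complex.mul_conj]
      _ = 1 := by norm_cast
  have h3 : (-(a * (starRingEnd ℂ) b)) • y = z * y * star z := by
    conv_lhs => rw [h2]
    rw [smul_neg, neg_smul, neg_neg, smul_smul, hinv, one_smul]
  rw [← h3, neg_mul, ← Algebra.smul_def, ← neg_smul]
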